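/- The following DELKh-formulas are valid: (i) Kh(¬¬p → p) for all atoms p ∈ P; (ii) Kh(((p→q)→p)→p) for all atoms p, q ∈ P; (iii) Kh((¬α → β∨γ) → ((¬α→β) ∨ (¬α→γ))) for all PL-formulas α, β, γ (the Kreisel–Putnam schema); (iv) Kh((¬α → ⋁_{1≤i≤k} ¬β_i) → ⋁_{1≤i≤k}(¬α → ¬β_i)) for all k ∈ ℕ and PL-formulas α, β_1, …, β_k. -/

import Mathlib

/-- Formulas of the propositional language `PL` over atoms `P`. -/
inductive PLForm (P : Type) : Type
  | atom : P → PLForm P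
  | bot  : PLForm P
  | and  : PLForm P → PLForm P → PLForm P
  | or   : PLForm P → PLForm P → PLForm P
  | imp  : PLForm P → PLForm P → PLForm P

/-- `¬α` abbreviates `α → ⊥`. -/
def PLForm.neg {P : Type} (α : PLForm P) : PLForm P := α.imp .bot

/-- The resolution space `S(α)`, realized as a type: `S(p)` and `S(⊥)` are
singletons, `S(α∨β)` is the disjoint union, `S(α∧β)` the product, and
`S(α→β)` the full function space. -/
def RS (P : Type) : PLForm P → Type
  | .atom _  => Unit
  | .bot     => Unit
  | .or a b  => RS P a ⊕ RS P b
  | .and a b => RS P a × RS P b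
  | .imp a b => RS P a → RS P b

/-- An epistemic (information) model over atoms `P` with worlds `W`:
`W` is nonempty and `V` a valuation. -/
structure Model (P W : Type) where
  ne : Nonempty W
  V : W → Set P

/-- The actual resolutions `R(w,α) ⊆ S(α)` at a world `w`. -/
def Res {P W : Type} (M : Model P W) (w : W) : (α : PLForm P) → Set (RS P α)
  | .atom p  => {_u : Unit | p ∈ M.V w}
  | .bot     => ∅
  | .or a b  => (Sum.inl '' Res M w a) ∪ (Sum.inr '' Res M w b)
  | .and a b => (Res M w a) ×ˢ (Res M w b)
  | .imp a b => {f : RS P a → RS P b | f '' Res M w a ⊆ Res M w b}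

/-- Formulas of the dynamic epistemic language `DELKh`. -/
inductive DForm (P : Type) : Type
  | atom : P → DForm P
  | bot  : DForm P
  | and  : DForm P → DForm P → DForm P
  | or   : DForm P → DForm P → DForm P
  | imp  : DForm P → DForm P → DForm P
  | K    : DForm P → DForm P
  | box  : DForm P → DForm P
  | kh   : PLForm P → DForm P

def DForm.neg {P : Type} (φ : DForm P) : DForm P := φ.imp .bot
def DForm.dia {P : Type} (φ : DForm P) : DForm P := (DForm.box φ.neg).neg
def DForm.biImp {P : Type} (φ ψ : DForm P) : DForm P := (φ.imp ψ).and (ψ.imp φ)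

/-- Embedding of `PL` into `DELKh`. -/
def PLForm.toD {P : Type} : PLForm P → DForm P
  | .atom p  => .atom p
  | .bot     => .bot
  | .and a b => (toD a).and (toD b)
  | .or a b  => (toD a).or (toD b)
  | .imp a b => (toD a).imp (toD b)

/-- The submodel of `M` determined by a nonempty set `s` of worlds,
with the restricted valuation. -/
def Model.restrict {P W : Type} (M : Model P W) (s : Set W) (h : s.Nonempty) :
    Model P s :=
  { ne := ⟨⟨h.choose, h.choose_spec⟩⟩, V := fun w => M.V w.1 }

/-- Satisfaction of `DELKh`-formulas at a pointed model `(M,w)`. -/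
def Sat (P : Type) : (W : Type) → Model P W → W → DForm P → Prop
  | _, M, w, .atom p  => p ∈ M.V w
  | _, _, _, .bot     => False
  | W, M, w, .and a b => Sat P W M w a ∧ Sat P W M w b
  | W, M, w, .or a b  => Sat P W M w a ∨ Sat P W M w b
  | W, M, w, .imp a b => Sat P W M w a → Sat P W M w b
  | W, M, _, .K φ     => ∀ v : W, Sat P W M v φ
  | W, M, w, .box φ   =>
      ∀ (s : Set W) (h : w ∈ s), Sat P s (M.restrict s ⟨w, h⟩) ⟨w, h⟩ φ
  | W, M, _, .kh α    => ∃ x : RS P α, ∀ v : W, x ∈ Res M v α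

/-- A `DELKh`-formula is valid if it holds at every pointed model. -/
def Valid {P : Type} (φ : DForm P) : Prop :=
  ∀ (W : Type) (M : Model P W) (w : W), Sat P W M w φ

/-- Semantic entailment from a set of `DELKh`-formulas. -/
def EntailsSet {P : Type} (Γ : Set (DForm P)) (φ : DForm P) : Prop :=
  ∀ (W : Type) (M : Model P W) (w : W),
    (∀ ψ ∈ Γ, Sat P W M w ψ) → Sat P W M w φ

/-- Classical satisfaction of `PL`-formulas at a pointed model. -/
def PLSat {P W : Type} (M : Model P W) (w : W) : PLForm P → Prop
  | .atom p  => p ∈ M.V w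
  | .bot     => False
  | .and a b => PLSat M w a ∧ PLSat M w b
  | .or a b  => PLSat M w a ∨ PLSat M w b
  | .imp a b => PLSat M w a → PLSat M w b

/-- Inquisitive support of `PL`-formulas at a state `s` of a model `M`. -/
def Support (P W : Type) (M : Model P W) : Set W → PLForm P → Prop
  | s, .atom p  => ∀ w ∈ s, p ∈ M.V w
  | s, .bot     => s = ∅
  | s, .and a b => Support P W M s a ∧ Support P W M s b
  | s, .or a b  => Support P W M s a ∨ Support P W M s b
  | s, .imp a b => ∀ t ⊆ s, Support P W M t a → Support P W M t b

/-- The disjunction of the members of a (nonempty) finite list of formulas. -/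
def bigOr {P : Type} : List (PLForm P) → PLForm P
  | []        => PLForm.bot
  | [a]       => a
  | a :: rest => a.or (bigOr rest)

section Helpers

variable {P W : Type}

lemma mem_imp {M : Model P W} {v : W} {a b : PLForm P} {f : RS P (a.imp b)} :
    f ∈ Res M v (a.imp b) ↔ ∀ x ∈ Res M v a, f x ∈ Res M v b := by
  constructor
  · rintro h x hx
    exact h ⟨x, hx, rfl⟩
  · rintro h y ⟨x, hx, rfl⟩
    exact h x hx

lemma mem_neg {M : Model P W} {v : W} {γ : PLForm P} {h : RS P γ.neg} :
    h ∈ Res M v γ.neg ↔ Res M v γ = ∅ := by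
  show h '' Res M v γ ⊆ (∅ : Set (RS P PLForm.bot)) ↔ _
  rw [Set.subset_empty_iff]
  exact Set.image_eq_empty

lemma neg_empty {M : Model P W} {v : W} {γ : PLForm P} (hγ : Res M v γ ≠ ∅) :
    Res M v γ.neg = ∅ := by
  ext h
  simp only [Set.mem_empty_iff_false, iff_false]
  intro hmem
  exact hγ (mem_neg.mp hmem)

lemma mem_or {M : Model P W} {v : W} {a b : PLForm P} {z : RS P (a.or b)} :
    z ∈ Res M v (a.or b) ↔
      (∃ x ∈ Res M v a, Sum.inl x = z) ∨ (∃ y ∈ Res M v b, Sum.inr y = z) :=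
  Iff.rfl

/-- The antecedent of the `ND` schema. -/
def ndLHS {P : Type} (α : PLForm P) (L : List (PLForm P)) : PLForm P :=
  α.neg.imp (bigOr (L.map PLForm.neg))

/-- The consequent of the `ND` schema. -/
def ndRHS {P : Type} (α : PLForm P) (L : List (PLForm P)) : PLForm P :=
  bigOr (L.map fun c => α.neg.imp c.neg)

/-- Uniform resolution witnessing the `ND` schema for a nonempty list of formulas. -/
lemma nd_lemma {P : Type} (α : PLForm P) (b : PLForm P) (l : List (PLForm P)) :
    ∃ F : RS P (ndLHS α (b :: l)) → RS P (ndRHS α (b :: l)),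
      ∀ (W : Type) (M : Model P W) (v : W)
        (g : RS P (ndLHS α (b :: l))),
        g ∈ Res M v (ndLHS α (b :: l)) →
        F g ∈ Res M v (ndRHS α (b :: l)) := by
  induction l generalizing b with
  | nil => exact ⟨id, fun W M v g hg => hg⟩
  | cons c l ih =>
    obtain ⟨F', hF'⟩ := ih c
    refine ⟨fun g => match g (fun _ => ()) with
      | Sum.inl h => Sum.inl (fun _ => h)
      | Sum.inr d => Sum.inr (F' (fun _ => d)), ?_⟩
    intro W M v g hg
    simp only [ndLHS, List.map_cons] at hg
    replace hg := mem_imp.mp hg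
    simp only [ndRHS, List.map_cons]
    by_cases hα : Res M v α = ∅
    · have hu : (fun _ => ()) ∈ Res M v α.neg := mem_neg.mpr hα
      have hgu := hg _ hu
      rcases mem_or.mp hgu with ⟨h, hh, he⟩ | ⟨d, hd, he⟩
      · rw [show g (fun _ => ()) = Sum.inl h from he.symm]
        exact Or.inl ⟨fun _ => h, mem_imp.mpr fun x _ => hh, rfl⟩
      · rw [show g (fun _ => ()) = Sum.inr d from he.symm]
        exact Or.inr ⟨F' (fun _ => d),
          hF' W M v _ (mem_imp.mpr fun x _ => hd), rfl⟩
    · have hne : Res M v α.neg = ∅ := neg_empty hα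
      rcases hq : g (fun _ => ()) with h | d
      · refine Or.inl ⟨fun _ => h, mem_imp.mpr fun x hx => ?_, rfl⟩
        rw [hne] at hx
        exact absurd hx (Set.notMem_empty x)
      · refine Or.inr ⟨F' (fun _ => d), hF' W M v _ (mem_imp.mpr fun x hx => ?_), rfl⟩
        rw [hne] at hx
        exact absurd hx (Set.notMem_empty x)

end Helpers

/-- validity of (i) `Kh(¬¬p → p)`; (ii) Peirce's law for atoms
`Kh(((p→q)→p)→p)`; (iii) the Kreisel–Putnam schema
`Kh((¬α → β∨γ) → ((¬α→β) ∨ (¬α→γ)))`; and (iv) the schema `ND_k`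
`Kh((¬α → ⋁ᵢ ¬βᵢ) → ⋁ᵢ(¬α → ¬βᵢ))` for any `k ∈ ℕ` formulas `β₁,…,β_{k+1}`. -/
theorem kh_axiom_schemata_valid {P : Type} [Countable P] :
    (∀ p : P, Valid (DForm.kh ((PLForm.atom p).neg.neg.imp (.atom p)))) ∧
    (∀ p q : P, Valid (DForm.kh
      ((((PLForm.atom p).imp (.atom q)).imp (.atom p)).imp (.atom p)))) ∧
    (∀ α β γ : PLForm P, Valid (DForm.kh
      ((α.neg.imp (β.or γ)).imp ((α.neg.imp β).or (α.neg.imp γ))))) ∧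
    (∀ (k : ℕ) (α : PLForm P) (β : Fin (k + 1) → PLForm P), Valid (DForm.kh
      ((α.neg.imp (bigOr (List.ofFn fun i => (β i).neg))).imp
        (bigOr (List.ofFn fun i => α.neg.imp (β i).neg))))) := by
  refine ⟨?_, ?_, ?_, ?_⟩
  · -- (i) Kh(¬¬p → p)
    intro p W M w
    refine ⟨fun _ => (), fun v => ?_⟩
    refine mem_imp.mpr ?_
    intro y hy
    by_cases hp : p ∈ M.V v
    · exact hp
    · exfalso
      have h1 : Res M v (PLForm.atom p) = ∅ := by
        ext u
        simp only [Res, Set.mem_setOf_eq, Set.mem_empty_iff_false, iff_false]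
        exact hp
      have h2 : (fun _ => ()) ∈ Res M v (PLForm.atom p).neg := mem_neg.mpr h1
      have h3 := mem_neg.mp hy
      rw [h3] at h2
      exact absurd h2 (Set.notMem_empty _)
  · -- (ii) Peirce's law for atoms
    intro p q W M w
    refine ⟨fun _ => (), fun v => ?_⟩
    refine mem_imp.mpr ?_
    intro y hy
    by_cases hp : p ∈ M.V v
    · exact hp
    · exfalso
      have h1 : Res M v (PLForm.atom p) = ∅ := by
        ext u
        simp only [Res, Set.mem_setOf_eq, Set.mem_empty_iff_false, iff_false]
        exact hp
      have h2 : (fun x => x) ∈ Res M v ((PLForm.atom p).imp (.atom q)) := by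
        refine mem_imp.mpr ?_
        intro x hx
        rw [h1] at hx
        exact absurd hx (Set.notMem_empty x)
      have h3 := mem_imp.mp hy _ h2
      rw [h1] at h3
      exact absurd h3 (Set.notMem_empty _)
  · -- (iii) Kreisel–Putnam schema
    intro α β γ W M w
    refine ⟨fun g => match g (fun _ => ()) with
      | Sum.inl x => Sum.inl (fun _ => x)
      | Sum.inr y => Sum.inr (fun _ => y), fun v => ?_⟩
    refine mem_imp.mpr ?_
    intro g hg
    by_cases hα : Res M v α = ∅
    · have hu : (fun _ => ()) ∈ Res M v α.neg := mem_neg.mpr hα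
      have hgu := mem_imp.mp hg _ hu
      rcases mem_or.mp hgu with ⟨x, hx, he⟩ | ⟨y, hy, he⟩
      · rw [show g (fun _ => ()) = Sum.inl x from he.symm]
        exact Or.inl ⟨fun _ => x, mem_imp.mpr fun _ _ => hx, rfl⟩
      · rw [show g (fun _ => ()) = Sum.inr y from he.symm]
        exact Or.inr ⟨fun _ => y, mem_imp.mpr fun _ _ => hy, rfl⟩
    · have hne : Res M v α.neg = ∅ := neg_empty hα
      rcases hq : g (fun _ => ()) with x | y
      · refine Or.inl ⟨fun _ => x, mem_imp.mpr fun z hz => ?_, rfl⟩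
        rw [hne] at hz
        exact absurd hz (Set.notMem_empty z)
      · refine Or.inr ⟨fun _ => y, mem_imp.mpr fun z hz => ?_, rfl⟩
        rw [hne] at hz
        exact absurd hz (Set.notMem_empty z)
  · -- (iv) the ND_k schema
    intro k α β
    have h1 : (List.ofFn fun i => (β i).neg) = (List.ofFn β).map PLForm.neg := by
      rw [List.map_ofFn]
      rfl
    have h2 : (List.ofFn fun i => α.neg.imp (β i).neg)
        = (List.ofFn β).map (fun c => α.neg.imp c.neg) := by
      rw [List.map_ofFn]
      rfl
    rw [h1, h2, List.ofFn_succ]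
    obtain ⟨F, hF⟩ := nd_lemma α (β 0) (List.ofFn fun i => β i.succ)
    intro W M w
    refine ⟨F, fun v => ?_⟩
    refine mem_imp.mpr ?_
    intro g hg
    exact hF W M v g hg
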